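/- Let 𝔽 = ℝ. For every 0 ≤ d ≤ n_min, the set P^gcd_d of N-tuples of real polynomials (with degree bounds n) having a common divisor of degree at least d, viewed as a subset of the Euclidean space ℝ^{n_1+1} × ⋯ × ℝ^{n_N+1} of coefficient-vector tuples, is a closed set. -/

import Mathlib

open Polynomial

/-- The polynomial with coefficient vector `v` (coefficient of `X^i` is `v i`). -/
noncomputable def toPoly {m : ℕ} (v : Fin m → ℝ) : ℝ[X] :=
  ∑ i, C (v i) * X ^ (i : ℕ)

lemma toPoly_coeff {m : ℕ} (v : Fin m → ℝ) (i : ℕ) :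
    (toPoly v).coeff i = if h : i < m then v ⟨i, h⟩ else 0 := by
  simp only [toPoly, finset_sum_coeff, coeff_C_mul, coeff_X_pow, mul_ite, mul_one, mul_zero]
  split_ifs with h
  · rw [Finset.sum_eq_single (⟨i, h⟩ : Fin m)]
    · simp
    · intro b _ hb
      simp only [ite_eq_right_iff]
      intro hbi
      exact absurd (Fin.ext hbi.symm) hb
    · simp
  · apply Finset.sum_eq_zero
    intro b _
    simp only [ite_eq_right_iff]
    intro hbi
    exact absurd (hbi ▸ b.isLt) h -- maybe

lemma toPoly_eq_zero {m : ℕ} {v : Fin m → ℝ} (h : toPoly v = 0) : v = 0 := by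
  funext i
  have := congrArg (fun q => Polynomial.coeff q i) h
  simpa [toPoly_coeff] using this

lemma degree_toPoly_le {m : ℕ} (v : Fin (m + 1) → ℝ) : (toPoly v).degree ≤ (m : ℕ) := by
  refine le_trans (degree_sum_le _ _) ?_
  refine Finset.sup_le fun i _ => ?_
  refine le_trans (degree_C_mul_X_pow_le _ _) ?_
  exact_mod_cast Nat.lt_succ_iff.mp i.isLt

lemma continuous_toPoly_coeff {m : ℕ} (i : ℕ) :
    Continuous (fun v : Fin m → ℝ => (toPoly v).coeff i) := by
  simp only [toPoly_coeff]
  split_ifs with h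
  · exact continuous_apply _
  · exact continuous_const

lemma toPoly_smul {m : ℕ} (t : ℝ) (v : Fin m → ℝ) : toPoly (t • v) = C t * toPoly v := by
  simp only [toPoly, Finset.mul_sum, Pi.smul_apply, smul_eq_mul, C_mul, mul_assoc]

noncomputable def Fmul (N : ℕ) (n : Fin (N + 1) → ℕ) (d' : ℕ)
    (hg : (Fin (d' + 1) → ℝ) × ((k : Fin (N + 1)) → Fin (n k - d' + 1) → ℝ)) :
    (k : Fin (N + 1)) → Fin (n k + 1) → ℝ :=
  fun k i => (toPoly (hg.2 k) * toPoly hg.1).coeff i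

variable {N : ℕ} {n : Fin (N + 1) → ℕ} {d' : ℕ}

lemma degree_mul_le' (hle : ∀ k, d' ≤ n k) (h : Fin (d' + 1) → ℝ)
    (g : (k : Fin (N + 1)) → Fin (n k - d' + 1) → ℝ) (k : Fin (N + 1)) :
    (toPoly (g k) * toPoly h).degree ≤ (n k : ℕ) := by
  refine le_trans (degree_mul_le _ _) ?_
  have h1 := degree_toPoly_le (g k)
  have h2 := degree_toPoly_le h
  calc (toPoly (g k)).degree + (toPoly h).degree ≤ ((n k - d' : ℕ) : WithBot ℕ) + (d' : ℕ) :=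
        add_le_add h1 h2
    _ = ((n k - d' + d' : ℕ) : WithBot ℕ) := by exact_mod_cast rfl
    _ = (n k : ℕ) := by rw [Nat.sub_add_cancel (hle k)]

lemma toPoly_of_coeff {m : ℕ} (q : ℝ[X]) (hq : q.degree ≤ (m : ℕ)) :
    toPoly (fun i : Fin (m + 1) => q.coeff i) = q := by
  ext j
  rw [toPoly_coeff]
  split_ifs with hj
  · rfl
  · exact (coeff_eq_zero_of_degree_lt (lt_of_le_of_lt hq (by exact_mod_cast Nat.lt_of_succ_le (not_lt.mp hj)))).symm

lemma mem_iff_eq_Fmul (hle : ∀ k, d' ≤ n k) (p : (k : Fin (N + 1)) → Fin (n k + 1) → ℝ)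
    (h : Fin (d' + 1) → ℝ) (g : (k : Fin (N + 1)) → Fin (n k - d' + 1) → ℝ) :
    (∀ k, toPoly (p k) = toPoly (g k) * toPoly h) ↔ p = Fmul N n d' (h, g) := by
  constructor
  · intro H
    funext k i
    have := congrArg (fun q => Polynomial.coeff q i) (H k)
    simpa [Fmul, toPoly_coeff, Nat.lt_succ_iff.mp i.isLt] using this
  · intro H k
    rw [H]
    exact toPoly_of_coeff _ (degree_mul_le' hle h g k)

lemma Fmul_eq_zero (hle : ∀ k, d' ≤ n k) {h : Fin (d' + 1) → ℝ}
    {g : (k : Fin (N + 1)) → Fin (n k - d' + 1) → ℝ}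
    (hh : h ≠ 0) (hF : Fmul N n d' (h, g) = 0) : g = 0 := by
  funext k
  have hp : toPoly (g k) * toPoly h = 0 := by
    ext j
    rcases lt_or_ge j (n k + 1) with hj | hj
    · have := congrFun (congrFun hF k) ⟨j, hj⟩
      simpa [Fmul] using this
    · simp only [coeff_zero]
      exact coeff_eq_zero_of_degree_lt (lt_of_le_of_lt (degree_mul_le' hle h g k)
        (by exact_mod_cast hj))
  rcases mul_eq_zero.mp hp with h1 | h2
  · have := toPoly_eq_zero h1
    simpa using this
  · exact absurd (toPoly_eq_zero h2) hh

lemma Fmul_smul (t : ℝ) (h : Fin (d' + 1) → ℝ)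
    (g : (k : Fin (N + 1)) → Fin (n k - d' + 1) → ℝ) :
    Fmul N n d' (h, t • g) = t • Fmul N n d' (h, g) := by
  funext k i
  simp [Fmul, toPoly_smul, mul_assoc, coeff_C_mul]

lemma continuous_Fmul : Continuous (Fmul N n d') := by
  apply continuous_pi
  intro k
  apply continuous_pi
  intro i
  simp only [Fmul, coeff_mul]
  apply continuous_finset_sum
  intro x _
  exact ((continuous_toPoly_coeff x.1).comp (continuous_apply k |>.comp continuous_snd)).mul
    ((continuous_toPoly_coeff x.2).comp continuous_fst)

lemma coercive (hle : ∀ k, d' ≤ n k) :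
    ∃ c > 0, ∀ (h : Fin (d' + 1) → ℝ) (g : (k : Fin (N + 1)) → Fin (n k - d' + 1) → ℝ),
      ‖h‖ = 1 → c * ‖g‖ ≤ ‖Fmul N n d' (h, g)‖ := by
  set K := Metric.sphere (0 : Fin (d' + 1) → ℝ) 1 ×ˢ
      Metric.sphere (0 : (k : Fin (N + 1)) → Fin (n k - d' + 1) → ℝ) 1 with hKdef
  have hK : IsCompact K := (isCompact_sphere _ _).prod (isCompact_sphere _ _)
  have hKne : K.Nonempty := by
    refine Set.Nonempty.prod ?_ ?_ <;>
      exact NormedSpace.sphere_nonempty.mpr (by norm_num)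
  obtain ⟨x₀, hx₀K, hx₀⟩ := hK.exists_isMinOn hKne
    ((continuous_Fmul.norm).continuousOn)
  obtain ⟨h₀, g₀⟩ := x₀
  set c := ‖Fmul N n d' (h₀, g₀)‖ with hcdef
  have hx₀h : ‖h₀‖ = 1 := by
    have := hx₀K.1; rwa [mem_sphere_zero_iff_norm] at this
  have hx₀g : ‖g₀‖ = 1 := by
    have := hx₀K.2; rwa [mem_sphere_zero_iff_norm] at this
  have hc : 0 < c := by
    rcases (norm_nonneg (Fmul N n d' (h₀, g₀))).lt_or_eq with h | h
    · exact h
    · exfalso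
      have hF : Fmul N n d' (h₀, g₀) = 0 := by
        rwa [eq_comm, norm_eq_zero] at h
      have hh0 : h₀ ≠ 0 := by
        intro h0; rw [h0] at hx₀h; rw [norm_zero] at hx₀h; norm_num at hx₀h
      have : g₀ = 0 := Fmul_eq_zero hle hh0 hF
      rw [this, norm_zero] at hx₀g; norm_num at hx₀g
  refine ⟨c, hc, fun h g hh => ?_⟩
  rcases eq_or_ne g 0 with rfl | hg
  · simp
  · have hgn : ‖g‖ ≠ 0 := norm_ne_zero_iff.mpr hg
    set u := ‖g‖⁻¹ • g with hu
    have hun : ‖u‖ = 1 := by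
      rw [hu, norm_smul, norm_inv, norm_norm, inv_mul_cancel₀ hgn]
    have hgu : g = ‖g‖ • u := by rw [hu, smul_inv_smul₀ hgn]
    have hmem : (h, u) ∈ K := by
      constructor <;> rw [mem_sphere_zero_iff_norm] <;> assumption
    have hmin : c ≤ ‖Fmul N n d' (h, u)‖ := hx₀ hmem
    calc c * ‖g‖ ≤ ‖Fmul N n d' (h, u)‖ * ‖g‖ :=
          mul_le_mul_of_nonneg_right hmin (norm_nonneg g)
      _ = ‖Fmul N n d' (h, g)‖ := by
          have key : Fmul N n d' (h, g) = ‖g‖ • Fmul N n d' (h, u) := by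
            rw [← Fmul_smul, ← hgu]
          rw [key, norm_smul, norm_norm, mul_comm]

lemma isClosed_Scd (hle : ∀ k, d' ≤ n k) :
    IsClosed {p : (k : Fin (N + 1)) → Fin (n k + 1) → ℝ |
      ∃ h : Fin (d' + 1) → ℝ, h ≠ 0 ∧
        ∃ g : (k : Fin (N + 1)) → Fin (n k - d' + 1) → ℝ,
          ∀ k, toPoly (p k) = toPoly (g k) * toPoly h} := by
  apply IsSeqClosed.isClosed
  intro x p hx hlim
  have hw : ∀ j, ∃ hv : Fin (d' + 1) → ℝ,
      ∃ gv : (k : Fin (N + 1)) → Fin (n k - d' + 1) → ℝ,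
      ‖hv‖ = 1 ∧ x j = Fmul N n d' (hv, gv) := by
    intro j
    obtain ⟨h, hh, g, hgh⟩ := hx j
    have hn : ‖h‖ ≠ 0 := norm_ne_zero_iff.mpr hh
    refine ⟨‖h‖⁻¹ • h, fun k => ‖h‖ • g k, ?_, ?_⟩
    · rw [norm_smul, norm_inv, norm_norm, inv_mul_cancel₀ hn]
    · rw [← mem_iff_eq_Fmul hle]
      intro k
      rw [hgh k, toPoly_smul, toPoly_smul]
      calc toPoly (g k) * toPoly h
          = (C ‖h‖ * C ‖h‖⁻¹) * (toPoly (g k) * toPoly h) := by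
            rw [← C_mul, mul_inv_cancel₀ hn, C_1, one_mul]
        _ = C ‖h‖ * toPoly (g k) * (C ‖h‖⁻¹ * toPoly h) := by ring
  choose hv gv hhv hxj using hw
  obtain ⟨c, hc, hcoer⟩ := coercive hle
  obtain ⟨R, hR⟩ := (hlim.norm).bddAbove_range
  have hgb : ∀ j, ‖gv j‖ ≤ c⁻¹ * R := by
    intro j
    have h1 : c * ‖gv j‖ ≤ ‖x j‖ := by
      rw [hxj j]; exact hcoer _ _ (hhv j)
    have h2 : ‖x j‖ ≤ R := hR ⟨j, rfl⟩
    rw [le_inv_mul_iff₀ hc]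
    exact h1.trans h2
  set K := Metric.sphere (0 : Fin (d' + 1) → ℝ) 1 ×ˢ
      Metric.closedBall (0 : (k : Fin (N + 1)) → Fin (n k - d' + 1) → ℝ) (c⁻¹ * R) with hKdef
  have hK : IsCompact K := (isCompact_sphere _ _).prod (isCompact_closedBall _ _)
  have hmem : ∀ j, (hv j, gv j) ∈ K := by
    intro j
    exact ⟨mem_sphere_zero_iff_norm.mpr (hhv j), mem_closedBall_zero_iff.mpr (hgb j)⟩
  obtain ⟨⟨hl, gl⟩, hK', φ, hφ, hconv⟩ := hK.tendsto_subseq hmem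
  have h1 : Filter.Tendsto (fun j => Fmul N n d' (hv (φ j), gv (φ j)))
      Filter.atTop (nhds (Fmul N n d' (hl, gl))) :=
    ((continuous_Fmul.tendsto _).comp hconv)
  have h2 : Filter.Tendsto (fun j => x (φ j)) Filter.atTop (nhds p) :=
    hlim.comp (hφ.tendsto_atTop)
  have heq : p = Fmul N n d' (hl, gl) := by
    refine tendsto_nhds_unique ?_ h1
    have hfun : (fun j => Fmul N n d' (hv (φ j), gv (φ j))) = fun j => x (φ j) :=
      funext fun j => (hxj (φ j)).symm
    rw [hfun]
    exact h2
  have hhn : ‖hl‖ = 1 := mem_sphere_zero_iff_norm.mp hK'.1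
  refine ⟨hl, ?_, gl, (mem_iff_eq_Fmul hle p hl gl).mpr heq⟩
  intro h0
  rw [h0, norm_zero] at hhn
  norm_num at hhn

/-- Over `ℝ`, for every `0 ≤ d ≤ n_min`, the set `P^gcd_d` of `N`-tuples of real polynomials
(given by coefficient vectors) having a common divisor of degree at least `d`, i.e. lying in
`P^cd_{d'}` for some `d ≤ d' ≤ n_min`, viewed as a subset of `ℝ^{n_1+1} × ⋯ × ℝ^{n_N+1}`,
is closed. -/
theorem isClosed_Pgcd (N : ℕ) (n : Fin (N + 1) → ℕ) (d : ℕ) (hd : d ≤ ⨅ k, n k) :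
    IsClosed {p : (k : Fin (N + 1)) → Fin (n k + 1) → ℝ |
      ∃ d', d ≤ d' ∧ d' ≤ (⨅ k, n k) ∧
        ∃ h : Fin (d' + 1) → ℝ, h ≠ 0 ∧
          ∃ g : (k : Fin (N + 1)) → Fin (n k - d' + 1) → ℝ,
            ∀ k, toPoly (p k) = toPoly (g k) * toPoly h} := by
  have hset : {p : (k : Fin (N + 1)) → Fin (n k + 1) → ℝ |
      ∃ d', d ≤ d' ∧ d' ≤ (⨅ k, n k) ∧
        ∃ h : Fin (d' + 1) → ℝ, h ≠ 0 ∧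
          ∃ g : (k : Fin (N + 1)) → Fin (n k - d' + 1) → ℝ,
            ∀ k, toPoly (p k) = toPoly (g k) * toPoly h} =
      ⋃ d' ∈ Finset.Icc d (⨅ k, n k),
        {p : (k : Fin (N + 1)) → Fin (n k + 1) → ℝ |
          ∃ h : Fin (d' + 1) → ℝ, h ≠ 0 ∧
            ∃ g : (k : Fin (N + 1)) → Fin (n k - d' + 1) → ℝ,
              ∀ k, toPoly (p k) = toPoly (g k) * toPoly h} := by
    ext p
    simp only [Set.mem_setOf_eq, Set.mem_iUnion, Finset.mem_Icc, exists_prop]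
    constructor
    · rintro ⟨d', h1, h2, h3⟩; exact ⟨d', ⟨h1, h2⟩, h3⟩
    · rintro ⟨d', ⟨h1, h2⟩, h3⟩; exact ⟨d', h1, h2, h3⟩
  rw [hset]
  apply Set.Finite.isClosed_biUnion (Finset.finite_toSet _)
  intro d' hd'
  have hle : ∀ k, d' ≤ n k := fun k =>
    le_trans (Finset.mem_Icc.mp hd').2 (ciInf_le (OrderBot.bddBelow _) k)
  exact isClosed_Scd hle
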